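/- There exists an absolute constant C > 0 such that for every α > 0, all integers 0 < m < N, every choice of multipliers q̂_0, …, q̂_N satisfying q̂_k = 0 for k ≤ m and 1 − m/k ≤ q̂_k < 1 for k > m, and every φ ∈ R_N, one has ‖D_x φ‖² ≤ C (‖D_x Q_m φ‖² + α² m² ‖φ‖²). -/

import Mathlib

open MeasureTheory Real

/-- Physicists' Hermite polynomial: `ℋ_n(x) = (−1)^n e^{x²} (dⁿ/dxⁿ) e^{−x²}`. -/
noncomputable def physHermite (n : ℕ) : ℝ → ℝ :=
  fun x => (-1 : ℝ) ^ n * Real.exp (x ^ 2) * iteratedDeriv n (fun y => Real.exp (-(y ^ 2))) x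

/-- Generalized Hermite function `H_n^α(x) = (α/(2^n n! √π))^{1/2} ℋ_n(αx) e^{−α²x²/2}`. -/
noncomputable def genHermite (α : ℝ) (n : ℕ) : ℝ → ℝ :=
  fun x => Real.sqrt (α / (2 ^ n * n.factorial * Real.sqrt Real.pi)) *
    physHermite n (α * x) * Real.exp (-(α ^ 2 * x ^ 2) / 2)

/-- Integer-indexed generalized Hermite function, with the convention `H_n^α ≡ 0` for `n < 0`. -/
noncomputable def genHermiteZ (α : ℝ) (n : ℤ) : ℝ → ℝ :=
  fun x => if 0 ≤ n then genHermite α n.toNat x else 0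

/-- The operator `D_x = ∂_x + α² x`. -/
noncomputable def Dx (α : ℝ) (u : ℝ → ℝ) : ℝ → ℝ :=
  fun x => deriv u x + α ^ 2 * x * u x

/-- The Sturm–Liouville operator
`L_α(u)(x) = −e^{α²x²/2} ∂_x(e^{−α²x²} ∂_x(e^{α²x²/2} u(x)))`. -/
noncomputable def SLop (α : ℝ) (u : ℝ → ℝ) : ℝ → ℝ :=
  fun x => -(Real.exp (α ^ 2 * x ^ 2 / 2) *
    deriv (fun y => Real.exp (-(α ^ 2 * y ^ 2)) *
      deriv (fun z => Real.exp (α ^ 2 * z ^ 2 / 2) * u z) y) x)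


noncomputable def PH : ℕ → Polynomial ℝ
  | 0 => 1
  | n + 1 => Polynomial.C 2 * Polynomial.X * PH n - (PH n).derivative

lemma PH_succ (n : ℕ) : PH (n + 1) = Polynomial.C 2 * Polynomial.X * PH n - (PH n).derivative :=
  rfl

lemma PH_derivative : ∀ n : ℕ, (PH (n + 1)).derivative = Polynomial.C (2 * (n + 1) : ℝ) * PH n
  | 0 => by simp [PH]
  | (n + 1) => by
      have ih := PH_derivative n
      rw [PH_succ (n + 1), Polynomial.derivative_sub, Polynomial.derivative_mul,
        Polynomial.derivative_mul, ih, Polynomial.derivative_C, Polynomial.derivative_X,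
        Polynomial.derivative_mul, Polynomial.derivative_C, PH_succ n]
      push_cast
      rw [show ((2:ℝ) * ((n:ℝ) + 1 + 1)) = 2 * ((n:ℝ) + 1) + 2 by ring, map_add]
      ring

lemma hasDerivAt_gauss (b x : ℝ) :
    HasDerivAt (fun y : ℝ => Real.exp (-(b * y ^ 2))) (-(2 * b * x) * Real.exp (-(b * x ^ 2))) x := by
  have h : HasDerivAt (fun y : ℝ => -(b * y ^ 2)) (-(2 * b * x)) x := by
    have := ((hasDerivAt_pow 2 x).const_mul b).neg
    exact this.congr_deriv (by norm_num; ring)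
  have := h.exp
  convert this using 1
  ring

lemma iteratedDeriv_gauss :
    ∀ n : ℕ, iteratedDeriv n (fun y : ℝ => Real.exp (-(y ^ 2))) =
      fun x => (-1 : ℝ) ^ n * (PH n).eval x * Real.exp (-(x ^ 2))
  | 0 => by
      funext x
      simp [PH]
  | (n + 1) => by
      funext x
      rw [iteratedDeriv_succ, iteratedDeriv_gauss n]
      have h1 : HasDerivAt (fun x : ℝ => (-1 : ℝ) ^ n * (PH n).eval x * Real.exp (-(x ^ 2)))
          ((-1 : ℝ) ^ n * ((PH n).derivative.eval x * Real.exp (-(x ^ 2))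
            + (PH n).eval x * (-(2 * x) * Real.exp (-(x ^ 2))))) x := by
        have hp := (PH n).hasDerivAt x
        have hg := hasDerivAt_gauss 1 x
        simp only [one_mul] at hg
        have := (hp.mul hg).const_mul ((-1 : ℝ) ^ n)
        have e : (fun x : ℝ => (-1 : ℝ) ^ n * (PH n).eval x * Real.exp (-(x ^ 2))) = fun y =>
            (-1 : ℝ) ^ n * (((fun x => (PH n).eval x) * fun y => Real.exp (-y ^ 2)) y) := by
          ext y; simp only [Pi.mul_apply]; ring
        rw [e]; exact this.congr_deriv (by ring)
      rw [h1.deriv]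
      have : (PH (n+1)).eval x = 2 * x * (PH n).eval x - (PH n).derivative.eval x := by
        show ((Polynomial.C 2 * Polynomial.X * PH n - (PH n).derivative).eval x) = _
        simp
      rw [this]
      ring

lemma physHermite_eq (n : ℕ) : physHermite n = fun x => (PH n).eval x := by
  funext x
  rw [physHermite, iteratedDeriv_gauss n]
  rw [show (-1:ℝ)^n * Real.exp (x^2) * ((-1:ℝ)^n * (PH n).eval x * Real.exp (-(x^2)))
    = ((-1:ℝ)^n)^2 * (Real.exp (x^2) * Real.exp (-(x^2))) * (PH n).eval x by ring,
    ← Real.exp_add]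
  simp [← pow_mul, pow_mul']

noncomputable def hcoef (α : ℝ) (n : ℕ) : ℝ :=
  Real.sqrt (α / (2 ^ n * n.factorial * Real.sqrt Real.pi))

lemma genHermite_eq (α : ℝ) (n : ℕ) : genHermite α n =
    fun x => hcoef α n * (PH n).eval (α * x) * Real.exp (-(α ^ 2 * x ^ 2) / 2) := by
  funext x
  rw [genHermite, physHermite_eq, hcoef]

lemma hasDerivAt_halfgauss (α x : ℝ) :
    HasDerivAt (fun y : ℝ => Real.exp (-(α ^ 2 * y ^ 2) / 2))
      (-(α ^ 2 * x) * Real.exp (-(α ^ 2 * x ^ 2) / 2)) x := by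
  have h : HasDerivAt (fun y : ℝ => -(α ^ 2 * y ^ 2) / 2) (-(α ^ 2 * x)) x := by
    have := (((hasDerivAt_pow 2 x).const_mul (α ^ 2)).neg).div_const 2
    exact this.congr_deriv (by norm_num; ring)
  have := h.exp
  convert this using 1
  ring

lemma genHermite_hasDerivAt (α : ℝ) (n : ℕ) (x : ℝ) :
    HasDerivAt (genHermite α n)
      (hcoef α n * (α * (PH n).derivative.eval (α * x)) * Real.exp (-(α ^ 2 * x ^ 2) / 2)
        - α ^ 2 * x * genHermite α n x) x := by
  rw [genHermite_eq]
  have hp : HasDerivAt (fun y : ℝ => (PH n).eval (α * y)) (α * (PH n).derivative.eval (α * x)) x := by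
    have := ((PH n).hasDerivAt (α * x)).comp x ((hasDerivAt_id x).const_mul α)
    simpa [Function.comp_def, mul_comm] using this
  have h2 := (hp.mul (hasDerivAt_halfgauss α x)).const_mul (hcoef α n)
  have hfun : (fun y => hcoef α n * ((PH n).eval (α*y) * Real.exp (-(α^2*y^2)/2)))
      = fun y => hcoef α n * (PH n).eval (α*y) * Real.exp (-(α^2*y^2)/2) := by
    funext y; ring
  simp only [Pi.mul_apply] at h2
  rw [hfun] at h2
  refine h2.congr_deriv ?_
  beta_reduce
  ring

lemma Dx_genHermite (α : ℝ) (n : ℕ) (x : ℝ) :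
    Dx α (genHermite α n) x =
      hcoef α n * (α * (PH n).derivative.eval (α * x)) * Real.exp (-(α ^ 2 * x ^ 2) / 2) := by
  rw [Dx, (genHermite_hasDerivAt α n x).deriv]
  ring

lemma hcoef_succ (α : ℝ) (hα : 0 < α) (n : ℕ) :
    hcoef α (n + 1) * (2 * ((n : ℝ) + 1)) = Real.sqrt (2 * ((n : ℝ) + 1)) * hcoef α n := by
  have hb : (0:ℝ) < 2 * ((n : ℝ) + 1) := by positivity
  have hA : (0:ℝ) ≤ α / (2 ^ n * n.factorial * Real.sqrt Real.pi) := by positivity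
  have key : (α / (2 ^ (n+1) * (n+1).factorial * Real.sqrt Real.pi))
      = (α / (2 ^ n * n.factorial * Real.sqrt Real.pi)) / (2 * ((n : ℝ) + 1)) := by
    rw [div_div]
    congr 1
    push_cast [Nat.factorial_succ]
    ring
  rw [hcoef, hcoef, key, Real.sqrt_div hA, div_mul_eq_mul_div, mul_div_assoc,
    Real.div_sqrt, mul_comm]

lemma Dx_genHermite_zero (α : ℝ) : Dx α (genHermite α 0) = fun _ => 0 := by
  funext x
  rw [Dx_genHermite]
  simp [PH]

lemma Dx_genHermite_succ (α : ℝ) (hα : 0 < α) (n : ℕ) :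
    Dx α (genHermite α (n + 1)) =
      fun x => (α * Real.sqrt (2 * ((n : ℝ) + 1))) * genHermite α n x := by
  funext x
  rw [Dx_genHermite, PH_derivative, genHermite_eq]
  simp only [Polynomial.eval_mul, Polynomial.eval_C]
  rw [show hcoef α (n+1) * (α * (2 * ((n:ℝ)+1) * (PH n).eval (α*x))) * Real.exp (-(α^2*x^2)/2)
      = α * (hcoef α (n+1) * (2 * ((n:ℝ)+1))) * (PH n).eval (α*x) * Real.exp (-(α^2*x^2)/2) by ring,
    hcoef_succ α hα n]
  ring

lemma integrable_poly_gauss (p : Polynomial ℝ) {b : ℝ} (hb : 0 < b) :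
    Integrable (fun x : ℝ => p.eval x * Real.exp (-b * x ^ 2)) := by
  induction p using Polynomial.induction_on' with
  | add p q hp hq => simpa [add_mul, Pi.add_def] using hp.add hq
  | monomial n a =>
      have h1 := integrable_rpow_mul_exp_neg_mul_sq hb (s := (n : ℝ))
        (by exact_mod_cast neg_one_lt_zero.trans_le (Nat.cast_nonneg n))
      have h2 : Integrable (fun x : ℝ => x ^ n * Real.exp (-b * x ^ 2)) := by
        simpa [Real.rpow_natCast] using h1
      simpa [Polynomial.eval_monomial, mul_assoc] using h2.const_mul a

lemma integrable_poly_gauss1 (p : Polynomial ℝ) :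
    Integrable (fun x : ℝ => p.eval x * Real.exp (-x ^ 2)) := by
  have := integrable_poly_gauss p one_pos
  simpa using this

lemma hasDerivAt_PH_gauss (k : ℕ) (x : ℝ) :
    HasDerivAt (fun y : ℝ => (PH k).eval y * Real.exp (-y ^ 2))
      (-((PH (k + 1)).eval x * Real.exp (-x ^ 2))) x := by
  have hg : HasDerivAt (fun y : ℝ => Real.exp (-y ^ 2)) (-(2 * x) * Real.exp (-x ^ 2)) x := by
    have h : HasDerivAt (fun y : ℝ => -y ^ 2) (-(2 * x)) x := by
      have := (hasDerivAt_pow 2 x).neg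
      exact this.congr_deriv (by norm_num)
    have := h.exp
    convert this using 1
    ring
  have := ((PH k).hasDerivAt x).mul hg
  refine this.congr_deriv ?_
  have : (PH (k + 1)).eval x = 2 * x * (PH k).eval x - (PH k).derivative.eval x := by
    show ((Polynomial.C 2 * Polynomial.X * PH k - (PH k).derivative).eval x) = _
    simp
  rw [this]
  ring

lemma integral_PH_mul_gauss_step (j k : ℕ) :
    ∫ x : ℝ, (PH j).eval x * ((PH (k + 1)).eval x * Real.exp (-x ^ 2))
      = ∫ x : ℝ, (PH j).derivative.eval x * ((PH k).eval x * Real.exp (-x ^ 2)) := by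
  have key := integral_mul_deriv_eq_deriv_mul_of_integrable
    (u := fun x : ℝ => (PH j).eval x) (v := fun x : ℝ => (PH k).eval x * Real.exp (-x ^ 2))
    (u' := fun x : ℝ => (PH j).derivative.eval x)
    (v' := fun x : ℝ => -((PH (k + 1)).eval x * Real.exp (-x ^ 2)))
    (fun x _ => (PH j).hasDerivAt x) (fun x _ => hasDerivAt_PH_gauss k x)
    (by
      have := (integrable_poly_gauss1 (PH j * PH (k + 1))).neg
      refine this.congr (Filter.Eventually.of_forall fun x => ?_)
      simp [Pi.mul_apply, Polynomial.eval_mul]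
      ring)
    (by
      have := integrable_poly_gauss1 ((PH j).derivative * PH k)
      refine this.congr (Filter.Eventually.of_forall fun x => ?_)
      simp [Pi.mul_apply, Polynomial.eval_mul]
      ring)
    (by
      have := integrable_poly_gauss1 (PH j * PH k)
      refine this.congr (Filter.Eventually.of_forall fun x => ?_)
      simp [Pi.mul_apply, Polynomial.eval_mul]
      ring)
  have l1 : ∫ x : ℝ, (PH j).eval x * -((PH (k + 1)).eval x * Real.exp (-x ^ 2))
      = -∫ x : ℝ, (PH j).eval x * ((PH (k + 1)).eval x * Real.exp (-x ^ 2)) := by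
    rw [← integral_neg]
    congr 1; funext x; ring
  have l2 : ∫ x : ℝ, (PH j).derivative.eval x * ((PH k).eval x * Real.exp (-x ^ 2))
      = ∫ x : ℝ, (PH j).derivative.eval x * ((PH k).eval x * Real.exp (-x ^ 2)) := rfl
  rw [l1] at key
  linarith [key]

lemma integral_PH_zero_left (k : ℕ) :
    ∫ x : ℝ, (PH 0).eval x * ((PH (k + 1)).eval x * Real.exp (-x ^ 2)) = 0 := by
  have := integral_PH_mul_gauss_step 0 k
  rw [this]
  have : (PH 0).derivative = 0 := by simp [PH]
  simp [this]

lemma integral_PH_rec (j k : ℕ) :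
    ∫ x : ℝ, (PH (j + 1)).eval x * ((PH (k + 1)).eval x * Real.exp (-x ^ 2))
      = (2 * ((j : ℝ) + 1)) * ∫ x : ℝ, (PH j).eval x * ((PH k).eval x * Real.exp (-x ^ 2)) := by
  rw [integral_PH_mul_gauss_step (j + 1) k, PH_derivative j, ← integral_const_mul]
  congr 1; funext x
  push_cast
  simp [Polynomial.eval_mul]
  ring

lemma integral_PH_symm (j k : ℕ) :
    ∫ x : ℝ, (PH j).eval x * ((PH k).eval x * Real.exp (-x ^ 2))
      = ∫ x : ℝ, (PH k).eval x * ((PH j).eval x * Real.exp (-x ^ 2)) := by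
  congr 1; funext x; ring

lemma integral_PH_mul_gauss : ∀ j k : ℕ,
    ∫ x : ℝ, (PH j).eval x * ((PH k).eval x * Real.exp (-x ^ 2))
      = if j = k then 2 ^ j * (j.factorial : ℝ) * Real.sqrt Real.pi else 0 := by
  intro j
  induction j with
  | zero =>
      intro k
      cases k with
      | zero =>
          have h0 : (fun x : ℝ => (PH 0).eval x * ((PH 0).eval x * Real.exp (-x ^ 2)))
              = fun x : ℝ => Real.exp (-(1:ℝ) * x ^ 2) := by
            funext x; simp [PH]
          rw [h0, integral_gaussian]
          simp
      | succ k => simpa using integral_PH_zero_left k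
  | succ j ih =>
      intro k
      cases k with
      | zero =>
          rw [integral_PH_symm]
          simpa using integral_PH_zero_left j
      | succ k =>
          rw [integral_PH_rec j k, ih k]
          by_cases h : j = k
          · subst h
            simp only [if_pos rfl, if_pos rfl]
            rw [Nat.factorial_succ]
            push_cast
            ring
          · have h' : j + 1 ≠ k + 1 := by omega
            simp [h, h']

lemma genHermite_mul (α : ℝ) (j k : ℕ) (x : ℝ) :
    genHermite α j x * genHermite α k x
      = hcoef α j * hcoef α k *
        ((PH j).eval (α * x) * ((PH k).eval (α * x) * Real.exp (-(α * x) ^ 2))) := by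
  simp only [genHermite_eq]
  have hE : Real.exp (-(α ^ 2 * x ^ 2) / 2) * Real.exp (-(α ^ 2 * x ^ 2) / 2)
      = Real.exp (-(α * x) ^ 2) := by
    rw [← Real.exp_add]; congr 1; ring
  linear_combination (hcoef α j * (PH j).eval (α * x) * (hcoef α k * (PH k).eval (α * x))) * hE

lemma integrable_genHermite_mul {α : ℝ} (hα : 0 < α) (j k : ℕ) :
    Integrable (fun x : ℝ => genHermite α j x * genHermite α k x) := by
  have h := (integrable_poly_gauss ((PH j * PH k).comp (Polynomial.C α * Polynomial.X))
    (show (0:ℝ) < α ^ 2 by positivity)).const_mul (hcoef α j * hcoef α k)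
  refine h.congr (Filter.Eventually.of_forall fun x => ?_)
  beta_reduce
  rw [genHermite_mul]
  simp only [Polynomial.eval_comp, Polynomial.eval_mul, Polynomial.eval_C, Polynomial.eval_X]
  rw [show -(α * x) ^ 2 = -(α ^ 2) * x ^ 2 by ring]
  ring

lemma integral_genHermite_mul {α : ℝ} (hα : 0 < α) (j k : ℕ) :
    ∫ x : ℝ, genHermite α j x * genHermite α k x = if j = k then 1 else 0 := by
  have hrw : (fun x : ℝ => genHermite α j x * genHermite α k x)
      = fun x : ℝ => hcoef α j * hcoef α k *
          ((PH j).eval (α * x) * ((PH k).eval (α * x) * Real.exp (-(α * x) ^ 2))) :=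
    funext (genHermite_mul α j k)
  rw [hrw]
  rw [integral_const_mul]
  have hcomp := MeasureTheory.Measure.integral_comp_mul_left
    (g := fun y : ℝ => (PH j).eval y * ((PH k).eval y * Real.exp (-y ^ 2))) α
  rw [hcomp, integral_PH_mul_gauss j k]
  rcases eq_or_ne j k with h | h
  · subst h
    simp only [if_pos rfl, if_true]
    have hc2 : hcoef α j * hcoef α j = α / (2 ^ j * (j.factorial : ℝ) * Real.sqrt Real.pi) := by
      rw [hcoef]
      exact Real.mul_self_sqrt (by positivity)
    rw [hc2, abs_of_pos (by positivity : (0:ℝ) < α⁻¹), smul_eq_mul]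
    have hD : (0:ℝ) < 2 ^ j * (j.factorial : ℝ) * Real.sqrt Real.pi := by
      have := Real.sqrt_pos.mpr Real.pi_pos
      positivity
    field_simp
  · simp [h]

lemma integral_sq_sum {α : ℝ} (hα : 0 < α) (M : ℕ) (e : ℕ → ℝ) :
    ∫ x : ℝ, (∑ k ∈ Finset.range M, e k * genHermite α k x) ^ 2
      = ∑ k ∈ Finset.range M, (e k) ^ 2 := by
  have hexp : (fun x : ℝ => (∑ k ∈ Finset.range M, e k * genHermite α k x) ^ 2)
      = fun x => ∑ j ∈ Finset.range M, ∑ k ∈ Finset.range M,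
          (e j * e k) * (genHermite α j x * genHermite α k x) := by
    funext x
    rw [sq, Finset.sum_mul_sum]
    exact Finset.sum_congr rfl fun j _ => Finset.sum_congr rfl fun k _ => by ring
  rw [hexp, integral_finset_sum _ fun j _ => integrable_finset_sum _ fun k _ =>
    ((integrable_genHermite_mul hα j k).const_mul _)]
  refine Finset.sum_congr rfl fun j hj => ?_
  rw [integral_finset_sum _ fun k _ => (integrable_genHermite_mul hα j k).const_mul _]
  have h1 : ∀ k ∈ Finset.range M,
      (∫ x : ℝ, (e j * e k) * (genHermite α j x * genHermite α k x))
        = if j = k then e j * e k else 0 := by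
    intro k _
    rw [integral_const_mul, integral_genHermite_mul hα]
    split_ifs <;> ring
  rw [Finset.sum_congr rfl h1, Finset.sum_ite_eq (Finset.range M) j (fun k => e j * e k),
    if_pos hj, sq]

lemma Dx_sum (α : ℝ) (M : ℕ) (e : ℕ → ℝ) (x : ℝ) :
    Dx α (fun x => ∑ k ∈ Finset.range M, e k * genHermite α k x) x
      = ∑ k ∈ Finset.range M, e k * Dx α (genHermite α k) x := by
  have hd : HasDerivAt (fun x : ℝ => ∑ k ∈ Finset.range M, e k * genHermite α k x)
      (∑ k ∈ Finset.range M,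
        e k * (hcoef α k * (α * (PH k).derivative.eval (α * x)) * Real.exp (-(α ^ 2 * x ^ 2) / 2)
          - α ^ 2 * x * genHermite α k x)) x :=
    HasDerivAt.fun_sum fun k _ => (genHermite_hasDerivAt α k x).const_mul (e k)
  rw [Dx, hd.deriv]
  beta_reduce
  simp only [Dx_genHermite]
  rw [Finset.mul_sum, ← Finset.sum_add_distrib]
  exact Finset.sum_congr rfl fun k _ => by ring

/-- with the viscosity operator `Q_m` acting on
`φ = Σ_{k=0}^N c_k H_k^α ∈ R_N` by `Q_m φ = Σ_{k=0}^N q̂_k c_k H_k^α`, one has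
`‖D_x φ‖² ≤ C (‖D_x Q_m φ‖² + α² m² ‖φ‖²)` for an absolute constant `C > 0`. -/
theorem Dx_le_DxQ : ∃ C : ℝ, 0 < C ∧ ∀ (α : ℝ), 0 < α → ∀ (m N : ℕ), 0 < m → m < N →
    ∀ q : ℕ → ℝ, (∀ k ≤ N, k ≤ m → q k = 0) →
    (∀ k ≤ N, m < k → 1 - (m : ℝ) / (k : ℝ) ≤ q k ∧ q k < 1) →
    ∀ (c : ℕ → ℝ) (φ Qφ : ℝ → ℝ),
    (φ = fun x => ∑ k ∈ Finset.range (N + 1), c k * genHermite α k x) →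
    (Qφ = fun x => ∑ k ∈ Finset.range (N + 1), q k * c k * genHermite α k x) →
    ∫ x : ℝ, (Dx α φ x) ^ 2
      ≤ C * ((∫ x : ℝ, (Dx α Qφ x) ^ 2) + α ^ 2 * (m : ℝ) ^ 2 * ∫ x : ℝ, (φ x) ^ 2) := by
  refine ⟨4, by norm_num, ?_⟩
  intro α hα m N hm hmN q hq1 hq2 c φ Qφ hφ hQφ
  have hsq : ∀ (a : ℝ) (k : ℕ), (a * (α * Real.sqrt (2 * ((k : ℝ) + 1)))) ^ 2
      = a ^ 2 * (α ^ 2 * (2 * ((k : ℝ) + 1))) := by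
    intro a k
    rw [mul_pow, mul_pow, Real.sq_sqrt (by positivity)]
  -- rewrite Dx φ
  have hDφ : Dx α φ = fun x => ∑ k ∈ Finset.range N,
      (c (k + 1) * (α * Real.sqrt (2 * ((k : ℝ) + 1)))) * genHermite α k x := by
    funext x
    rw [hφ, Dx_sum α (N + 1) c x, Finset.sum_range_succ']
    simp only [Dx_genHermite_zero, Dx_genHermite_succ α hα]
    rw [mul_zero, add_zero]
    exact Finset.sum_congr rfl fun k _ => by ring
  have hDQφ : Dx α Qφ = fun x => ∑ k ∈ Finset.range N,
      ((q (k + 1) * c (k + 1)) * (α * Real.sqrt (2 * ((k : ℝ) + 1)))) * genHermite α k x := by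
    funext x
    rw [hQφ, Dx_sum α (N + 1) (fun k => q k * c k) x, Finset.sum_range_succ']
    simp only [Dx_genHermite_zero, Dx_genHermite_succ α hα]
    rw [mul_zero, add_zero]
    exact Finset.sum_congr rfl fun k _ => by ring
  have hI1 : ∫ x : ℝ, (Dx α φ x) ^ 2
      = ∑ k ∈ Finset.range N, (c (k + 1)) ^ 2 * (α ^ 2 * (2 * ((k : ℝ) + 1))) := by
    simp only [hDφ]
    rw [integral_sq_sum hα]
    exact Finset.sum_congr rfl fun k _ => hsq _ k
  have hI2 : ∫ x : ℝ, (Dx α Qφ x) ^ 2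
      = ∑ k ∈ Finset.range N, (q (k + 1) * c (k + 1)) ^ 2 * (α ^ 2 * (2 * ((k : ℝ) + 1))) := by
    simp only [hDQφ]
    rw [integral_sq_sum hα]
    exact Finset.sum_congr rfl fun k _ => hsq _ k
  have hI3 : ∫ x : ℝ, (φ x) ^ 2 = ∑ k ∈ Finset.range (N + 1), (c k) ^ 2 := by
    simp only [hφ]
    rw [integral_sq_sum hα]
  have hS : ∑ k ∈ Finset.range (N + 1), (c k) ^ 2
      = (∑ k ∈ Finset.range N, (c (k + 1)) ^ 2) + (c 0) ^ 2 :=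
    Finset.sum_range_succ' _ N
  have hm1 : (1 : ℝ) ≤ (m : ℝ) := by exact_mod_cast hm
  -- termwise inequality
  have main : ∀ k ∈ Finset.range N,
      (c (k + 1)) ^ 2 * (α ^ 2 * (2 * ((k : ℝ) + 1)))
        ≤ 4 * ((q (k + 1) * c (k + 1)) ^ 2 * (α ^ 2 * (2 * ((k : ℝ) + 1))))
          + (4 * (α ^ 2 * (m : ℝ) ^ 2)) * (c (k + 1)) ^ 2 := by
    intro k hk
    have hkN : k + 1 ≤ N := Finset.mem_range.mp hk
    by_cases hcase : k + 1 ≤ 2 * m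
    · have hle : ((k : ℝ) + 1) ≤ 2 * (m : ℝ) := by exact_mod_cast hcase
      have h2j : 2 * ((k : ℝ) + 1) ≤ 4 * (m : ℝ) ^ 2 := by nlinarith
      nlinarith [mul_nonneg (mul_nonneg (sq_nonneg (c (k + 1))) (sq_nonneg α))
          (sub_nonneg.mpr h2j),
        mul_nonneg (sq_nonneg (q (k + 1) * c (k + 1)))
          (by positivity : (0:ℝ) ≤ α ^ 2 * (2 * ((k : ℝ) + 1)))]
    · push_neg at hcase
      have hmk : m < k + 1 := by omega
      obtain ⟨hql, _⟩ := hq2 (k + 1) hkN hmk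
      push_cast at hql
      have hj0 : (0 : ℝ) < (k : ℝ) + 1 := by positivity
      have hdiv : (m : ℝ) / ((k : ℝ) + 1) ≤ 1 / 2 := by
        rw [div_le_div_iff₀ hj0 (by norm_num)]
        have : (2 * m : ℝ) < (k : ℝ) + 1 := by exact_mod_cast hcase
        linarith
      have hqge : (1 : ℝ) / 2 ≤ q (k + 1) := by linarith
      have hX : (0:ℝ) ≤ (c (k + 1)) ^ 2 * (α ^ 2 * (2 * ((k : ℝ) + 1))) := by positivity
      nlinarith [mul_nonneg (by nlinarith : (0:ℝ) ≤ 4 * (q (k + 1)) ^ 2 - 1) hX,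
        mul_nonneg (by positivity : (0:ℝ) ≤ 4 * (α ^ 2 * (m : ℝ) ^ 2)) (sq_nonneg (c (k + 1)))]
  have h1 := Finset.sum_le_sum main
  have h2 : ∑ k ∈ Finset.range N,
      (4 * ((q (k + 1) * c (k + 1)) ^ 2 * (α ^ 2 * (2 * ((k : ℝ) + 1))))
        + (4 * (α ^ 2 * (m : ℝ) ^ 2)) * (c (k + 1)) ^ 2)
      = 4 * (∑ k ∈ Finset.range N, (q (k + 1) * c (k + 1)) ^ 2 * (α ^ 2 * (2 * ((k : ℝ) + 1))))
        + (4 * (α ^ 2 * (m : ℝ) ^ 2)) * ∑ k ∈ Finset.range N, (c (k + 1)) ^ 2 := by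
    rw [Finset.sum_add_distrib, Finset.mul_sum, Finset.mul_sum]
  have hc0 : (0:ℝ) ≤ α ^ 2 * (m : ℝ) ^ 2 * (c 0) ^ 2 := by positivity
  rw [hI1, hI2, hI3, hS]
  have expand : 4 * ((∑ k ∈ Finset.range N, (q (k + 1) * c (k + 1)) ^ 2 * (α ^ 2 * (2 * ((k : ℝ) + 1))))
      + α ^ 2 * (m : ℝ) ^ 2 * ((∑ k ∈ Finset.range N, (c (k + 1)) ^ 2) + (c 0) ^ 2))
      = 4 * (∑ k ∈ Finset.range N, (q (k + 1) * c (k + 1)) ^ 2 * (α ^ 2 * (2 * ((k : ℝ) + 1))))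
        + (4 * (α ^ 2 * (m : ℝ) ^ 2)) * (∑ k ∈ Finset.range N, (c (k + 1)) ^ 2)
        + 4 * (α ^ 2 * (m : ℝ) ^ 2 * (c 0) ^ 2) := by ring
  rw [expand]
  rw [h2] at h1
  linarith
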